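/- Let N = 2^J and let x ∈ ℝ^N have nonnegative entries. For every j with 0 ≤ j ≤ J-1, the support lengths of the periodizations are monotone: |supp x^(j)| ≤ |supp x^(j+1)|. In particular, m_0 ≤ m_1 ≤ … ≤ m_J = m, where m_j = |supp x^(j)| and m = |supp x|. -/

import Mathlib

open Complex Finset

/-- `ω_M = e^{-2πi/M}`. -/
noncomputable def dftOmega (M : ℕ) : ℂ := Complex.exp (-2 * Real.pi * Complex.I / M)

/-- Discrete Fourier transform of length `M`: `(F_M v)_k = Σ_{r<M} ω_M^{k r} v_r`. -/
noncomputable def dft (M : ℕ) (v : ℕ → ℂ) (k : ℕ) : ℂ :=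
  ∑ r ∈ Finset.range M, dftOmega M ^ (k * r) * v r

/-- The `2^j`-periodization of a vector `x ∈ ℝ^{2^J}`:
`x^(j)_k = Σ_{ℓ < 2^{J-j}} x_{k + 2^j ℓ}`. -/
noncomputable def periodization (J j : ℕ) (x : ℕ → ℝ) (k : ℕ) : ℝ :=
  ∑ ℓ ∈ Finset.range (2 ^ (J - j)), x (k + 2 ^ j * ℓ)
/-- The support length of `y ∈ ℝ^M`: the minimal `m` such that `y` vanishes outside some
cyclic interval `{(μ+ℓ) mod M : ℓ < m}`. -/
noncomputable def suppLength (M : ℕ) (y : ℕ → ℝ) : ℕ :=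
  sInf {m : ℕ | ∃ μ < M, ∀ k < M, (∀ ℓ < m, k ≠ (μ + ℓ) % M) → y k = 0}

lemma sum_range_two_mul_real (n : ℕ) (f : ℕ → ℝ) :
    ∑ ℓ ∈ Finset.range (2 * n), f ℓ
      = ∑ i ∈ Finset.range n, f (2 * i) + ∑ i ∈ Finset.range n, f (2 * i + 1) := by
  induction n with
  | zero => simp
  | succ n ih =>
    have h : 2 * (n + 1) = 2 * n + 1 + 1 := by ring
    rw [h, Finset.sum_range_succ, Finset.sum_range_succ,
      Finset.sum_range_succ (fun i => f (2 * i)), Finset.sum_range_succ (fun i => f (2 * i + 1)),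
      ih]
    ring

lemma periodization_split (J j : ℕ) (h : j + 1 ≤ J) (x : ℕ → ℝ) (k : ℕ) :
    periodization J j x k
      = periodization J (j + 1) x k + periodization J (j + 1) x (k + 2 ^ j) := by
  unfold periodization
  have h1 : J - j = (J - (j + 1)) + 1 := by omega
  rw [h1, pow_succ, mul_comm (2 ^ (J - (j + 1))) 2, sum_range_two_mul_real]
  congr 1
  · apply Finset.sum_congr rfl
    intro i _
    congr 1
    rw [pow_succ]
    ring
  · apply Finset.sum_congr rfl
    intro i _
    congr 1
    rw [pow_succ]
    ring

/-- for nonnegative `x`, the support lengths of the periodizations are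
monotone: `|supp x^(j)| ≤ |supp x^(j+1)|`; and `m_J = m` since `x^(J) = x`. -/
theorem suppLength_periodization_mono (J : ℕ) (x : ℕ → ℝ) (hx : ∀ k, 0 ≤ x k) :
    (∀ j, j + 1 ≤ J →
      suppLength (2 ^ j) (periodization J j x)
        ≤ suppLength (2 ^ (j + 1)) (periodization J (j + 1) x)) ∧
    suppLength (2 ^ J) (periodization J J x) = suppLength (2 ^ J) x := by
  constructor
  · intro j hj
    unfold suppLength
    set M := 2 ^ (j + 1) with hM
    have hMpos : 0 < M := Nat.pow_pos (by norm_num)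
    have hjpos : 0 < 2 ^ j := Nat.pow_pos (by norm_num)
    have hne : {m : ℕ | ∃ μ < M, ∀ k < M,
        (∀ ℓ < m, k ≠ (μ + ℓ) % M) → periodization J (j + 1) x k = 0}.Nonempty := by
      refine ⟨M, 0, hMpos, fun k hk hall => absurd (hall k hk) ?_⟩
      simp [Nat.mod_eq_of_lt hk]
    have hmem := Nat.sInf_mem hne
    obtain ⟨μ, hμ, H⟩ := hmem
    apply Nat.sInf_le
    refine ⟨μ % 2 ^ j, Nat.mod_lt _ hjpos, fun k hk havoid => ?_⟩
    have hMeq : M = 2 * 2 ^ j := by rw [hM, pow_succ]; ring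
    have hdvd : (2 : ℕ) ^ j ∣ M := ⟨2, by omega⟩
    rw [periodization_split J j hj x k]
    have key : ∀ k' : ℕ, k' < M → k' % 2 ^ j = k → periodization J (j + 1) x k' = 0 := by
      intro k' hk' hmod
      refine H k' hk' (fun ℓ hℓ heq => havoid ℓ hℓ ?_)
      have : k' % 2 ^ j = (μ + ℓ) % M % 2 ^ j := by rw [heq]
      rw [Nat.mod_mod_of_dvd _ hdvd, hmod] at this
      rw [this]
      exact (Nat.mod_add_mod μ (2 ^ j) ℓ).symm
    have h1 : periodization J (j + 1) x k = 0 :=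
      key k (by omega) (Nat.mod_eq_of_lt hk)
    have h2 : periodization J (j + 1) x (k + 2 ^ j) = 0 :=
      key (k + 2 ^ j) (by omega) (by rw [Nat.add_mod_right]; exact Nat.mod_eq_of_lt hk)
    rw [h1, h2, add_zero]
  · have hxp : periodization J J x = x := by
      funext k
      simp [periodization]
    rw [hxp]
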